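/- arXiv:2307.01883 — 3 statements merged into one kernel-verified Lean document; each statement's English description precedes it below -/
import Mathlib

section
/- Let E be a commutative ring, L a formal group law over E, and N ≥ 0. Let R be the quotient of E⟦D₀,…,D_N⟧ by the ideal generated by r_j := D_j² − D_j·L(−D₀,…,−D_{j−1},−D_{j+1},…,−D_N) for 0 ≤ j ≤ N. Then there exist power series f₀ = 1 and f_j ∈ E⟦D₀,…,D_N⟧ involving only the variables D₀,…,D_{j−1} (for 1 ≤ j ≤ N) such that, in R, L(D₀,…,D_N) = f₀·D₀ + f₁(D₀)·D₁ + f₂(D₀,D₁)·D₂ + ⋯ + f_N(D₀,…,D_{N−1})·D_N. -/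
open MvPowerSeries

open Classical in
/-- Substitution of a family of multivariate power series (with zero constant term)
into a multivariate power series with finitely many variables. -/
noncomputable def msubst {E : Type*} [CommRing E] {σ τ : Type*} [Fintype σ]
    (a : σ → MvPowerSeries τ E) (f : MvPowerSeries σ E) : MvPowerSeries τ E :=
  fun e =>
    ∑ d ∈ Finset.Icc (0 : σ →₀ ℕ)
        (Finsupp.equivFunOnFinite.symm fun _ : σ => e.sum fun _ n => n),
      MvPowerSeries.coeff d f * MvPowerSeries.coeff e (∏ i : σ, a i ^ d i)

/-- A (commutative, one-dimensional) formal group law over a commutative ring. -/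
def IsFormalGroupLaw {E : Type*} [CommRing E] (L : MvPowerSeries (Fin 2) E) : Prop :=
  msubst ![(X 0 : MvPowerSeries (Fin 2) E), 0] L = X 0 ∧
  msubst ![(0 : MvPowerSeries (Fin 2) E), X 1] L = X 1 ∧
  msubst ![(X 1 : MvPowerSeries (Fin 2) E), X 0] L = L ∧
  msubst ![msubst ![(X 0 : MvPowerSeries (Fin 3) E), X 1] L, X 2] L =
    msubst ![(X 0 : MvPowerSeries (Fin 3) E), msubst ![X 1, X 2] L] L

/-- The iterated formal sum `u₁ +_L u₂ +_L ⋯ +_L u_m`, bracketed from the left. -/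
noncomputable def fglIter {E : Type*} [CommRing E] (L : MvPowerSeries (Fin 2) E) {τ : Type*} :
    List (MvPowerSeries τ E) → MvPowerSeries τ E
  | [] => 0
  | a :: l => l.foldl (fun u v => msubst ![u, v] L) a

/-- The relation `r_j := D_j² − D_j · L(−D₀,…,−D_{j−1},−D_{j+1},…,−D_N)` in
`E⟦D₀,…,D_N⟧` (the `j`-th variable is omitted from the iterated formal sum of the
negated variables). -/
noncomputable def fglRel {E : Type*} [CommRing E] (L : MvPowerSeries (Fin 2) E) (N : ℕ)
    (j : Fin (N + 1)) : MvPowerSeries (Fin (N + 1)) E :=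
  X j ^ 2 -
    X j * fglIter L (List.ofFn fun i : Fin N =>
      -(X (j.succAbove i) : MvPowerSeries (Fin (N + 1)) E))

/-- The iterated formal sum `L(D₀,…,D_N)` of the variables of `E⟦D₀,…,D_N⟧`. -/
noncomputable def fglVarSum {E : Type*} [CommRing E] (L : MvPowerSeries (Fin 2) E) (N : ℕ) :
    MvPowerSeries (Fin (N + 1)) E :=
  fglIter L (List.ofFn fun i : Fin (N + 1) => (X i : MvPowerSeries (Fin (N + 1)) E))

section PartI
variable {E : Type*} [CommRing E] {τ : Type*}

/-- degree abbreviation -/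
local notation "Dg" => Finsupp.degree

lemma Dg_sum_eq (e : τ →₀ ℕ) : (e.sum fun _ n => n) = Finsupp.degree e := rfl

lemma Dg_add (a b : τ →₀ ℕ) : Finsupp.degree (a + b) = Finsupp.degree a + Finsupp.degree b := by
  classical
  simp only [← Dg_sum_eq]
  exact Finsupp.sum_add_index' (fun _ => rfl) (fun _ _ _ => rfl)

lemma coeff_msubst_zero (a : Fin 2 → MvPowerSeries τ E) (f : MvPowerSeries (Fin 2) E) :
    coeff (R := E) (0 : τ →₀ ℕ) (msubst a f) = coeff (R := E) (0 : Fin 2 →₀ ℕ) f := by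
  classical
  letI : DecidableEq (Fin 2) := fun a b => Classical.propDecidable (a = b)
  rw [coeff_apply, msubst]
  have h0 : (Finsupp.equivFunOnFinite.symm fun _ : Fin 2 => (0 : τ →₀ ℕ).sum fun _ n => n)
      = (0 : Fin 2 →₀ ℕ) := by
    ext i; simp
  rw [h0]
  rw [Finset.Icc_self, Finset.sum_singleton]
  have h1 : (∏ i : Fin 2, a i ^ ((0 : Fin 2 →₀ ℕ) i)) = 1 := by simp
  rw [h1, coeff_zero_one, mul_one]

/-- `p` has order at least `n`. -/
def OrdGE (n : ℕ) (p : MvPowerSeries τ E) : Prop :=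
  ∀ d : τ →₀ ℕ, Finsupp.degree d < n → coeff (R := E) d p = 0

lemma OrdGE.mono {m n : ℕ} {p : MvPowerSeries τ E} (h : OrdGE n p) (hmn : m ≤ n) : OrdGE m p :=
  fun d hd => h d (lt_of_lt_of_le hd hmn)

lemma ordGE_of_constantCoeff_eq_zero {p : MvPowerSeries τ E}
    (h : coeff (R := E) (0 : τ →₀ ℕ) p = 0) : OrdGE 1 p := by
  intro d hd
  have : d = 0 := by
    rw [← Finsupp.degree_eq_zero_iff]; omega
  rwa [this]

lemma OrdGE.mul {m n : ℕ} {p q : MvPowerSeries τ E} (hp : OrdGE m p) (hq : OrdGE n q) :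
    OrdGE (m + n) (p * q) := by
  classical
  intro d hd
  rw [coeff_mul]
  apply Finset.sum_eq_zero
  rintro ⟨u, v⟩ huv
  rw [Finset.HasAntidiagonal.mem_antidiagonal] at huv
  have hdeg : Finsupp.degree u + Finsupp.degree v = Finsupp.degree d := by
    rw [← huv, Dg_add]
  rcases lt_or_ge (Finsupp.degree u) m with h | h
  · rw [hp u h, zero_mul]
  · rw [hq v (by omega), mul_zero]

lemma OrdGE.pow {k : ℕ} {p : MvPowerSeries τ E} (hp : OrdGE 1 p) : OrdGE k (p ^ k) := by
  induction k with
  | zero => intro d hd; omega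
  | succ k ih =>
      rw [pow_succ]
      exact (ih.mul hp :)

lemma OrdGE.neg {n : ℕ} {p : MvPowerSeries τ E} (hp : OrdGE n p) : OrdGE n (-p) := by
  intro d hd; rw [map_neg, hp d hd, neg_zero]

lemma Dg_single (i : τ) (n : ℕ) : Finsupp.degree (Finsupp.single i n) = n := by
  rw [← Dg_sum_eq, Finsupp.sum_single_index]; rfl

lemma coeff_msubst_single (a : Fin 2 → MvPowerSeries τ E)
    (h0 : ∀ s, coeff (R := E) (0 : τ →₀ ℕ) (a s) = 0) (f : MvPowerSeries (Fin 2) E) (i : τ) :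
    coeff (R := E) (Finsupp.single i 1) (msubst a f) =
      coeff (R := E) (Finsupp.single 0 1) f * coeff (R := E) (Finsupp.single i 1) (a 0) +
      coeff (R := E) (Finsupp.single 1 1) f * coeff (R := E) (Finsupp.single i 1) (a 1) := by
  classical
  letI : DecidableEq (Fin 2) := fun a b => Classical.propDecidable (a = b)
  rw [coeff_apply, msubst]
  have hsum : ((Finsupp.single i 1 : τ →₀ ℕ).sum fun _ n => n) = 1 := by
    rw [Dg_sum_eq, Dg_single]
  rw [hsum]
  have hec : Finsupp.degree (Finsupp.single i 1 : τ →₀ ℕ) = 1 := Dg_single i 1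
  set S : Finset (Fin 2 →₀ ℕ) :=
    {Finsupp.single (0 : Fin 2) 1, Finsupp.single (1 : Fin 2) 1} with hS
  have hmem : ∀ d : Fin 2 →₀ ℕ, (∀ s : Fin 2, d s ≤ 1) →
      d ∈ Finset.Icc (0 : Fin 2 →₀ ℕ) (Finsupp.equivFunOnFinite.symm fun _ : Fin 2 => 1) := by
    intro d hd
    rw [Finset.mem_Icc]
    refine ⟨zero_le, ?_⟩
    rw [Finsupp.le_iff]
    intro s _
    simpa using hd s
  have hsub : S ⊆ Finset.Icc (0 : Fin 2 →₀ ℕ)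
      (Finsupp.equivFunOnFinite.symm fun _ : Fin 2 => 1) := by
    intro d hd
    apply hmem
    rw [hS] at hd
    simp only [Finset.mem_insert, Finset.mem_singleton] at hd
    rcases hd with rfl | rfl <;> intro s <;> simp [Finsupp.single_apply] <;> split <;> omega
  rw [← Finset.sum_subset hsub]
  · have hne : (Finsupp.single (0 : Fin 2) 1 : Fin 2 →₀ ℕ) ≠ Finsupp.single 1 1 := by
      intro h
      have := DFunLike.congr_fun h (0 : Fin 2)
      simp [Finsupp.single_apply] at this
    rw [hS, Finset.sum_pair hne]
    congr 1
    · congr 1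
      rw [coeff_apply]
      rw [show (∏ s : Fin 2, a s ^ (Finsupp.single (0:Fin 2) 1) s) = a 0 by
        rw [Fin.prod_univ_two]; simp, coeff_apply]
    · congr 1
      rw [coeff_apply]
      rw [show (∏ s : Fin 2, a s ^ (Finsupp.single (1:Fin 2) 1) s) = a 1 by
        rw [Fin.prod_univ_two]; simp, coeff_apply]
  · intro d hd hdS
    rw [Finset.mem_Icc] at hd
    have hdle : ∀ s : Fin 2, d s ≤ 1 := by
      intro s
      have := hd.2
      rw [Finsupp.le_iff] at this
      by_cases hs : s ∈ d.support
      · simpa using this s hs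
      · simp only [Finsupp.notMem_support_iff] at hs; omega
    -- d is not single 0 1 nor single 1 1; cases on values
    have h00 : d 0 ≤ 1 := hdle 0
    have h11 : d 1 ≤ 1 := hdle 1
    have hdfun : ∀ u v : Fin 2 →₀ ℕ, u 0 = v 0 → u 1 = v 1 → u = v := by
      intro u v h0' h1'
      ext s
      fin_cases s <;> assumption
    rcases Nat.lt_or_ge (d 0 + d 1) 2 with hlt | hge
    · -- d = 0, single 0 1, or single 1 1
      interval_cases h : (d 0) <;> interval_cases h' : (d 1)
      · -- d = 0
        have : d = 0 := hdfun d 0 (by simpa using h) (by simpa using h')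
        subst this
        have : coeff (R := E) (Finsupp.single i 1) (∏ s : Fin 2, a s ^ (0 : Fin 2 →₀ ℕ) s) = 0 := by
          have h1 : (∏ s : Fin 2, a s ^ ((0 : Fin 2 →₀ ℕ) s)) = 1 := by simp
          rw [h1, coeff_one, if_neg (by simp)]
        rw [coeff_apply, this, mul_zero]
      · exact absurd (hdfun d (Finsupp.single 1 1) (by simp [h]) (by simp [h'])) (by simp [hS] at hdS; tauto)
      · exact absurd (hdfun d (Finsupp.single 0 1) (by simp [h]) (by simp [h'])) (by simp [hS] at hdS; tauto)
      · omega
    · -- degree ≥ 2 : product vanishes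
      have hord : OrdGE (d 0 + d 1) (∏ s : Fin 2, a s ^ d s) := by
        rw [Fin.prod_univ_two]
        exact (ordGE_of_constantCoeff_eq_zero (h0 0)).pow.mul
          (ordGE_of_constantCoeff_eq_zero (h0 1)).pow
      rw [coeff_apply, hord _ (by omega), mul_zero]

variable {L : MvPowerSeries (Fin 2) E}

lemma fgl_coeff_zero (hL : IsFormalGroupLaw L) : coeff (R := E) (0 : Fin 2 →₀ ℕ) L = 0 := by
  have := congrArg (coeff (R := E) (0 : Fin 2 →₀ ℕ)) hL.1
  rwa [coeff_msubst_zero, coeff_zero_X] at this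

lemma fgl_coeff_10 (hL : IsFormalGroupLaw L) :
    coeff (R := E) (Finsupp.single (0 : Fin 2) 1) L = 1 := by
  have := congrArg (coeff (R := E) (Finsupp.single (0 : Fin 2) 1)) hL.1
  rw [coeff_msubst_single _ (by intro s; fin_cases s <;> simp)] at this
  simpa using this

lemma fgl_coeff_01 (hL : IsFormalGroupLaw L) :
    coeff (R := E) (Finsupp.single (1 : Fin 2) 1) L = 1 := by
  have := congrArg (coeff (R := E) (Finsupp.single (1 : Fin 2) 1)) hL.2.1
  rw [coeff_msubst_single _ (by intro s; fin_cases s <;> simp)] at this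
  simpa using this

lemma foldl_coeffs (hL : IsFormalGroupLaw L) (l : List (MvPowerSeries τ E)) :
    ∀ u : MvPowerSeries τ E, coeff (R := E) (0 : τ →₀ ℕ) u = 0 →
      (∀ b ∈ l, coeff (R := E) (0 : τ →₀ ℕ) b = 0) →
      coeff (R := E) (0 : τ →₀ ℕ) (l.foldl (fun u v => msubst ![u, v] L) u) = 0 ∧
      ∀ i : τ, coeff (R := E) (Finsupp.single i 1) (l.foldl (fun u v => msubst ![u, v] L) u) =
        coeff (R := E) (Finsupp.single i 1) u +
          (l.map fun b => coeff (R := E) (Finsupp.single i 1) b).sum := by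
  induction l with
  | nil => intro u hu _; simpa using hu
  | cons b l ih =>
      intro u hu hall
      have hb : coeff (R := E) (0 : τ →₀ ℕ) b = 0 := hall b (by simp)
      have hu' : coeff (R := E) (0 : τ →₀ ℕ) (msubst ![u, b] L) = 0 := by
        rw [coeff_msubst_zero, fgl_coeff_zero hL]
      have h0 : ∀ s : Fin 2, coeff (R := E) (0 : τ →₀ ℕ) (![u, b] s) = 0 := by
        intro s; fin_cases s <;> simpa
      obtain ⟨h1, h2⟩ := ih (msubst ![u, b] L) hu' (fun c hc => hall c (by simp [hc]))
      refine ⟨h1, fun i => ?_⟩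
      rw [List.foldl_cons] at *
      rw [h2 i, coeff_msubst_single _ h0, fgl_coeff_10 hL, fgl_coeff_01 hL]
      simp [add_assoc]

lemma fglIter_coeffs (hL : IsFormalGroupLaw L) (l : List (MvPowerSeries τ E))
    (hall : ∀ b ∈ l, coeff (R := E) (0 : τ →₀ ℕ) b = 0) :
    coeff (R := E) (0 : τ →₀ ℕ) (fglIter L l) = 0 ∧
      ∀ i : τ, coeff (R := E) (Finsupp.single i 1) (fglIter L l) =
        (l.map fun b => coeff (R := E) (Finsupp.single i 1) b).sum := by
  cases l with
  | nil => simp [fglIter]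
  | cons b l =>
      obtain ⟨h1, h2⟩ := foldl_coeffs hL l b (hall b (by simp))
        (fun c hc => hall c (by simp [hc]))
      exact ⟨h1, fun i => by rw [fglIter, h2 i]; simp⟩
end PartI

section PartIb
variable {E : Type*} [CommRing E] {L : MvPowerSeries (Fin 2) E} {N : ℕ}

lemma coeff_X' {τ : Type*} [DecidableEq τ] (i s : τ) :
    coeff (R := E) (Finsupp.single i 1) (X s : MvPowerSeries τ E) = if i = s then 1 else 0 := by
  rw [MvPowerSeries.coeff_X]
  congr 1
  simp [Finsupp.single_left_inj (one_ne_zero : (1:ℕ) ≠ 0)]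

lemma fglVarSum_coeff_zero (hL : IsFormalGroupLaw L) :
    coeff (R := E) (0 : Fin (N+1) →₀ ℕ) (fglVarSum L N) = 0 :=
  (fglIter_coeffs hL _ (fun b hb => by
    rw [List.mem_ofFn] at hb; obtain ⟨i, rfl⟩ := hb; exact coeff_zero_X i)).1

lemma fglVarSum_coeff_single_zero (hL : IsFormalGroupLaw L) :
    coeff (R := E) (Finsupp.single (0 : Fin (N+1)) 1) (fglVarSum L N) = 1 := by
  classical
  have := (fglIter_coeffs hL (List.ofFn fun i : Fin (N + 1) =>
    (X i : MvPowerSeries (Fin (N + 1)) E))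
    (fun b hb => by
      rw [List.mem_ofFn] at hb; obtain ⟨i, rfl⟩ := hb; exact coeff_zero_X i)).2 (0 : Fin (N+1))
  rw [fglVarSum, this, List.map_ofFn, List.sum_ofFn]
  simp only [Function.comp_apply, coeff_X']
  rw [Finset.sum_ite_eq (Finset.univ : Finset (Fin (N+1))) 0 (fun _ => (1:E))]
  simp

/-- The iterated formal sum of the negated variables omitting `j`. -/
noncomputable def sser (L : MvPowerSeries (Fin 2) E) (N : ℕ) (j : Fin (N+1)) :
    MvPowerSeries (Fin (N+1)) E :=
  fglIter L (List.ofFn fun i : Fin N => -(X (j.succAbove i) : MvPowerSeries (Fin (N + 1)) E))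

lemma sser_coeff_zero (hL : IsFormalGroupLaw L) (j : Fin (N+1)) :
    coeff (R := E) (0 : Fin (N+1) →₀ ℕ) (sser L N j) = 0 :=
  (fglIter_coeffs hL _ (fun b hb => by
    rw [List.mem_ofFn] at hb; obtain ⟨i, rfl⟩ := hb
    rw [map_neg, coeff_zero_X, neg_zero])).1

lemma sser_coeff_single (hL : IsFormalGroupLaw L) (j : Fin (N+1)) (i : Fin (N+1)) :
    coeff (R := E) (Finsupp.single i 1) (sser L N j) = if i = j then 0 else -1 := by
  classical
  have := (fglIter_coeffs hL (List.ofFn fun i : Fin N =>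
    -(X (j.succAbove i) : MvPowerSeries (Fin (N + 1)) E))
    (fun b hb => by
      rw [List.mem_ofFn] at hb; obtain ⟨k, rfl⟩ := hb
      rw [map_neg, coeff_zero_X, neg_zero])).2 i
  rw [sser, this, List.map_ofFn, List.sum_ofFn]
  simp only [Function.comp_apply, map_neg, coeff_X']
  by_cases hij : i = j
  · subst hij
    rw [if_pos rfl]
    apply Finset.sum_eq_zero
    intro k _
    rw [if_neg (Fin.succAbove_ne i k).symm, neg_zero]
  · rw [if_neg hij]
    obtain ⟨k₀, hk₀⟩ := Fin.exists_succAbove_eq hij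
    rw [Finset.sum_eq_single_of_mem k₀ (Finset.mem_univ k₀)]
    · rw [if_pos hk₀.symm]
    · intro k _ hk
      rw [if_neg, neg_zero]
      intro h
      exact hk (Fin.succAbove_right_injective (by rw [hk₀, ← h] : j.succAbove k = j.succAbove k₀))
end PartIb

section PartII
variable {E : Type*} [CommRing E] {N : ℕ}

/-- Sum of variables below `j`. -/
noncomputable def tlo (N : ℕ) (j : Fin (N+1)) : MvPowerSeries (Fin (N+1)) E :=
  ∑ i ∈ Finset.univ.filter (· < j), X i

/-- Sum of variables above `j`. -/
noncomputable def shi (N : ℕ) (j : Fin (N+1)) : MvPowerSeries (Fin (N+1)) E :=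
  ∑ i ∈ Finset.univ.filter (j < ·), X i

/-- Sum of all variables. -/
noncomputable def sig1 (N : ℕ) : MvPowerSeries (Fin (N+1)) E :=
  ∑ i : Fin (N+1), X i

lemma sig_split (j : Fin (N+1)) :
    (sig1 N : MvPowerSeries (Fin (N+1)) E) = tlo N j + X j + shi N j := by
  classical
  rw [sig1, tlo, shi, add_assoc, ← Finset.sum_filter_add_sum_filter_not Finset.univ (· < j)]
  congr 1
  have : Finset.univ.filter (fun i => ¬ i < j) =
      insert j (Finset.univ.filter (fun i : Fin (N+1) => j < i)) := by
    ext i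
    simp only [Finset.mem_filter, Finset.mem_univ, true_and, Finset.mem_insert, not_lt]
    constructor
    · intro h; rcases eq_or_lt_of_le h with h | h
      · exact Or.inl h.symm
      · exact Or.inr h
    · rintro (rfl | h)
      · exact le_refl _
      · exact le_of_lt h
  rw [this, Finset.sum_insert (by simp)]

lemma powred (j : Fin (N+1)) (a : ℕ) :
    (X j : MvPowerSeries (Fin (N+1)) E)^(a+1) =
      X j * (-(tlo N j))^a +
        (∑ k ∈ Finset.range a, (X j : MvPowerSeries (Fin (N+1)) E)^(a-k) * (-(tlo N j))^k) *
          (sig1 N - shi N j) := by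
  induction a with
  | zero => simp
  | succ a ih =>
      have hsq : (X j : MvPowerSeries (Fin (N+1)) E)^2 =
          X j * (sig1 N - shi N j) + X j * (-(tlo N j)) := by
        rw [sig_split j]; ring
      have key : ∑ k ∈ Finset.range (a+1),
            (X j : MvPowerSeries (Fin (N+1)) E)^(a+1-k) * (-(tlo N j))^k
          = X j * (-(tlo N j))^a +
            X j * ∑ k ∈ Finset.range a, (X j : MvPowerSeries (Fin (N+1)) E)^(a-k) * (-(tlo N j))^k := by
        have e1 : ∑ k ∈ Finset.range a,
              (X j : MvPowerSeries (Fin (N+1)) E)^(a+1-k) * (-(tlo N j))^k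
            = ∑ k ∈ Finset.range a,
              X j * ((X j : MvPowerSeries (Fin (N+1)) E)^(a-k) * (-(tlo N j))^k) :=
          Finset.sum_congr rfl (fun k hk => by
            rw [Finset.mem_range] at hk
            rw [show a+1-k = (a-k)+1 by omega, pow_succ]; ring)
        rw [Finset.sum_range_succ, e1, ← Finset.mul_sum, Nat.add_sub_cancel_left, pow_one]
        ring
      rw [pow_succ, ih, key]
      linear_combination (-(tlo N j))^a * hsq
end PartII

section PartIII
variable {E : Type*} [CommRing E] {N : ℕ}

open Finsupp

/-- The largest variable occurring in a monomial (junk value `0` for the empty monomial). -/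
noncomputable def maxv (e : Fin (N+1) →₀ ℕ) : Fin (N+1) :=
  if h : e = 0 then 0 else e.support.max' (Finsupp.support_nonempty_iff.mpr h)

lemma maxv_mem {e : Fin (N+1) →₀ ℕ} (h : e ≠ 0) : maxv e ∈ e.support := by
  rw [maxv, dif_neg h]
  exact Finset.max'_mem _ _

lemma le_maxv {e : Fin (N+1) →₀ ℕ} {i : Fin (N+1)} (h : i ∈ e.support) : i ≤ maxv e := by
  have he : e ≠ 0 := by
    intro h0; subst h0; simp at h
  rw [maxv, dif_neg he]
  exact Finset.le_max' _ _ h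

lemma maxv_pos {e : Fin (N+1) →₀ ℕ} (h : e ≠ 0) : 1 ≤ e (maxv e) := by
  have := maxv_mem h
  rw [Finsupp.mem_support_iff] at this
  omega

/-- Core of the `u` polynomials. -/
noncomputable def Bpol (e : Fin (N+1) →₀ ℕ) : MvPowerSeries (Fin (N+1)) E :=
  ∑ k ∈ Finset.range (e (maxv e) - 1),
    monomial (R := E) (e.erase (maxv e)) 1 * (X (maxv e))^(e (maxv e) - 2 - k) * (-(tlo N (maxv e)))^k

noncomputable def tpol (i : Fin (N+1)) (e : Fin (N+1) →₀ ℕ) : MvPowerSeries (Fin (N+1)) E :=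
  if e = 0 then 0
  else if i = maxv e then
    monomial (R := E) (e.erase (maxv e)) 1 * (-(tlo N (maxv e)))^(e (maxv e) - 1)
  else if maxv e < i then -(X (maxv e) * Bpol e)
  else 0

noncomputable def upol (i : Fin (N+1)) (e : Fin (N+1) →₀ ℕ) : MvPowerSeries (Fin (N+1)) E :=
  if e = 0 then 0 else if i = maxv e then Bpol e else 0

lemma monomial_decomp (e : Fin (N+1) →₀ ℕ) (he : e ≠ 0) :
    (monomial (R := E) e 1 : MvPowerSeries (Fin (N+1)) E) =
      ∑ i, tpol i e * X i + ∑ i, upol i e * (X i * sig1 N) := by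
  classical
  set j := maxv e with hj
  set a := e j with ha
  have ha1 : 1 ≤ a := maxv_pos he
  set m : MvPowerSeries (Fin (N+1)) E := monomial (R := E) (e.erase j) 1 with hm
  -- step 1 : monomial e 1 = m * X j ^ a
  have step1 : (monomial (R := E) e 1 : MvPowerSeries (Fin (N+1)) E) = m * X j ^ a := by
    rw [hm, X_pow_eq, monomial_mul_monomial, one_mul, Finsupp.erase_add_single]
  -- step 2 : the tpol sum
  have step2 : ∑ i, (tpol i e : MvPowerSeries (Fin (N+1)) E) * X i =
      tpol j e * X j + (-(X j * Bpol e)) * shi N j := by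
    have hsplit : ∀ i : Fin (N+1), (tpol i e : MvPowerSeries (Fin (N+1)) E) * X i =
        (if i = j then tpol j e * X j else 0) +
          (if j < i then (-(X j * Bpol e)) * X i else 0) := by
      intro i
      by_cases h1 : i = j
      · subst h1
        rw [if_pos rfl, if_neg (lt_irrefl _), add_zero]
      · rw [if_neg h1]
        by_cases h2 : j < i
        · rw [if_pos h2, tpol, if_neg he, if_neg h1, if_pos h2, zero_add]
        · rw [if_neg h2, tpol, if_neg he, if_neg h1, if_neg h2, zero_mul, add_zero]
    rw [Finset.sum_congr rfl (fun i _ => hsplit i)]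
    rw [Finset.sum_add_distrib, Finset.sum_ite_eq' Finset.univ j, if_pos (Finset.mem_univ j)]
    congr 1
    rw [← Finset.sum_filter, shi, Finset.mul_sum]
  -- step 3 : the upol sum
  have step3 : ∑ i, (upol i e : MvPowerSeries (Fin (N+1)) E) * (X i * sig1 N) =
      Bpol e * (X j * sig1 N) := by
    have hsplit : ∀ i : Fin (N+1), (upol i e : MvPowerSeries (Fin (N+1)) E) * (X i * sig1 N) =
        if i = j then Bpol e * (X j * sig1 N) else 0 := by
      intro i
      by_cases h1 : i = j
      · subst h1; rw [if_pos rfl, upol, if_neg he, if_pos rfl]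
      · rw [if_neg h1, upol, if_neg he, if_neg h1, zero_mul]
    rw [Finset.sum_congr rfl (fun i _ => hsplit i),
      Finset.sum_ite_eq' Finset.univ j, if_pos (Finset.mem_univ j)]
  -- the main computation
  have hXB : X j * Bpol e =
      ∑ k ∈ Finset.range (a - 1), m * (X j : MvPowerSeries (Fin (N+1)) E)^(a-1-k) * (-(tlo N j))^k := by
    rw [Bpol, Finset.mul_sum]
    refine Finset.sum_congr rfl (fun k hk => ?_)
    rw [Finset.mem_range] at hk
    rw [show a-1-k = (a-2-k)+1 by omega, pow_succ]
    ring
  have hpowred := powred (E := E) j (a - 1)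
  rw [show a - 1 + 1 = a by omega] at hpowred
  have hXB' : Bpol e * ((X j : MvPowerSeries (Fin (N+1)) E) * sig1 N) =
      (∑ k ∈ Finset.range (a - 1),
        m * (X j : MvPowerSeries (Fin (N+1)) E)^(a-1-k) * (-(tlo N j))^k) * sig1 N := by
    rw [show Bpol e * ((X j : MvPowerSeries (Fin (N+1)) E) * sig1 N)
      = (X j * Bpol e) * sig1 N from by ring, hXB]
  have hQ : (∑ k ∈ Finset.range (a - 1),
        m * (X j : MvPowerSeries (Fin (N+1)) E)^(a-1-k) * (-(tlo N j))^k)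
      = m * ∑ k ∈ Finset.range (a - 1),
        (X j : MvPowerSeries (Fin (N+1)) E)^(a-1-k) * (-(tlo N j))^k := by
    rw [Finset.mul_sum]
    exact Finset.sum_congr rfl (fun k _ => by ring)
  rw [step1, step2, step3, hpowred, tpol, if_neg he, if_pos rfl, hXB', hXB, hQ, ← hj, ← ha, ← hm]
  ring
end PartIII

section Homog
variable {E : Type*} [CommRing E] {τ : Type*}

/-- `p` is homogeneous of degree `c` (with `0` homogeneous of every degree). -/
def IsHomogD (c : ℕ) (p : MvPowerSeries τ E) : Prop :=
  ∀ d : τ →₀ ℕ, coeff (R := E) d p ≠ 0 → Finsupp.degree d = c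

lemma IsHomogD.zero (c : ℕ) : IsHomogD c (0 : MvPowerSeries τ E) := by
  intro d hd; simp at hd

lemma IsHomogD.monomial (e : τ →₀ ℕ) (x : E) : IsHomogD (Finsupp.degree e) (monomial (R := E) e x) := by
  classical
  intro d hd
  rw [coeff_monomial] at hd
  split at hd
  · subst ‹d = e›; rfl
  · exact absurd rfl hd

lemma IsHomogD.X (i : τ) : IsHomogD 1 (X i : MvPowerSeries τ E) := by
  have := IsHomogD.monomial (Finsupp.single i 1) (1 : E)
  rwa [Dg_single, ← X_def] at this

lemma IsHomogD.one : IsHomogD 0 (1 : MvPowerSeries τ E) := by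
  have := IsHomogD.monomial (0 : τ →₀ ℕ) (1 : E)
  rwa [map_zero, monomial_zero_one] at this

lemma IsHomogD.mul {a b : ℕ} {p q : MvPowerSeries τ E} (hp : IsHomogD a p) (hq : IsHomogD b q) :
    IsHomogD (a + b) (p * q) := by
  classical
  intro d hd
  rw [coeff_mul] at hd
  obtain ⟨⟨u, v⟩, huv, hne⟩ := Finset.exists_ne_zero_of_sum_ne_zero hd
  rw [Finset.HasAntidiagonal.mem_antidiagonal] at huv
  have h1 : coeff (R := E) u p ≠ 0 := fun h => hne (by rw [h, zero_mul])
  have h2 : coeff (R := E) v q ≠ 0 := fun h => hne (by rw [h, mul_zero])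
  rw [← huv, Dg_add, hp u h1, hq v h2]

lemma IsHomogD.pow {k : ℕ} {p : MvPowerSeries τ E} (hp : IsHomogD 1 p) : IsHomogD k (p ^ k) := by
  induction k with
  | zero => rw [pow_zero]; exact IsHomogD.one
  | succ k ih => rw [pow_succ]; exact (ih.mul hp :)

lemma IsHomogD.neg {c : ℕ} {p : MvPowerSeries τ E} (hp : IsHomogD c p) : IsHomogD c (-p) := by
  intro d hd
  rw [map_neg, neg_ne_zero] at hd
  exact hp d hd

lemma IsHomogD.sum {c : ℕ} {ι : Type*} {s : Finset ι} {f : ι → MvPowerSeries τ E}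
    (hf : ∀ i ∈ s, IsHomogD c (f i)) : IsHomogD c (∑ i ∈ s, f i) := by
  intro d hd
  rw [map_sum] at hd
  obtain ⟨i, hi, hne⟩ := Finset.exists_ne_zero_of_sum_ne_zero hd
  exact hf i hi d hne

/-- All variables of `p` lie in `S`. -/
def VarsIn (S : Set τ) (p : MvPowerSeries τ E) : Prop :=
  ∀ d : τ →₀ ℕ, coeff (R := E) d p ≠ 0 → ∀ i : τ, d i ≠ 0 → i ∈ S

lemma VarsIn.monomial {S : Set τ} {e : τ →₀ ℕ} (x : E) (h : ∀ i : τ, e i ≠ 0 → i ∈ S) :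
    VarsIn S (monomial (R := E) e x : MvPowerSeries τ E) := by
  classical
  intro d hd
  rw [coeff_monomial] at hd
  split at hd
  · subst ‹d = e›; exact h
  · exact absurd rfl hd

lemma VarsIn.X {S : Set τ} {i : τ} (h : i ∈ S) : VarsIn S (X i : MvPowerSeries τ E) := by
  classical
  rw [X_def]
  apply VarsIn.monomial
  intro k hk
  rw [Finsupp.single_apply] at hk
  split at hk
  · subst ‹i = k›; exact h
  · omega

lemma VarsIn.one {S : Set τ} : VarsIn S (1 : MvPowerSeries τ E) := by
  classical
  rw [← monomial_zero_one]
  apply VarsIn.monomial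
  intro k hk; simp at hk

lemma VarsIn.mul {S : Set τ} {p q : MvPowerSeries τ E} (hp : VarsIn S p) (hq : VarsIn S q) :
    VarsIn S (p * q) := by
  classical
  intro d hd
  rw [coeff_mul] at hd
  obtain ⟨⟨u, v⟩, huv, hne⟩ := Finset.exists_ne_zero_of_sum_ne_zero hd
  rw [Finset.HasAntidiagonal.mem_antidiagonal] at huv
  have h1 : coeff (R := E) u p ≠ 0 := fun h => hne (by rw [h, zero_mul])
  have h2 : coeff (R := E) v q ≠ 0 := fun h => hne (by rw [h, mul_zero])
  intro i hi
  have : u i ≠ 0 ∨ v i ≠ 0 := by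
    by_contra hc
    push_neg at hc
    apply hi
    rw [← huv]
    simp [Finsupp.add_apply, hc.1, hc.2]
  rcases this with h | h
  · exact hp u h1 i h
  · exact hq v h2 i h

lemma VarsIn.pow {S : Set τ} {k : ℕ} {p : MvPowerSeries τ E} (hp : VarsIn S p) :
    VarsIn S (p ^ k) := by
  induction k with
  | zero => rw [pow_zero]; exact VarsIn.one
  | succ k ih => rw [pow_succ]; exact ih.mul hp

lemma VarsIn.neg {S : Set τ} {p : MvPowerSeries τ E} (hp : VarsIn S p) : VarsIn S (-p) := by
  intro d hd
  rw [map_neg, neg_ne_zero] at hd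
  exact hp d hd

lemma VarsIn.sum {S : Set τ} {ι : Type*} {s : Finset ι} {f : ι → MvPowerSeries τ E}
    (hf : ∀ i ∈ s, VarsIn S (f i)) : VarsIn S (∑ i ∈ s, f i) := by
  intro d hd
  rw [map_sum] at hd
  obtain ⟨i, hi, hne⟩ := Finset.exists_ne_zero_of_sum_ne_zero hd
  exact hf i hi d hne

lemma VarsIn.zero {S : Set τ} : VarsIn S (0 : MvPowerSeries τ E) := by
  intro d hd; simp at hd

end Homog

section PolProps
variable {E : Type*} [CommRing E] {N : ℕ}

lemma VarsIn.mono {τ : Type*} {S S' : Set τ} {p : MvPowerSeries τ E} (hp : VarsIn S p)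
    (h : S ⊆ S') : VarsIn S' p :=
  fun d hd i hi => h (hp d hd i hi)

lemma tlo_homog (j : Fin (N+1)) : IsHomogD 1 (tlo N j : MvPowerSeries (Fin (N+1)) E) :=
  IsHomogD.sum (fun i _ => IsHomogD.X i)

lemma shi_homog (j : Fin (N+1)) : IsHomogD 1 (shi N j : MvPowerSeries (Fin (N+1)) E) :=
  IsHomogD.sum (fun i _ => IsHomogD.X i)

lemma sig1_homog : IsHomogD 1 (sig1 N : MvPowerSeries (Fin (N+1)) E) :=
  IsHomogD.sum (fun i _ => IsHomogD.X i)

lemma tlo_vars (j : Fin (N+1)) :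
    VarsIn {k : Fin (N+1) | k < j} (tlo N j : MvPowerSeries (Fin (N+1)) E) :=
  VarsIn.sum (fun i hi => VarsIn.X (by simpa using (Finset.mem_filter.mp hi).2))

lemma Dg_erase (e : Fin (N+1) →₀ ℕ) (j : Fin (N+1)) :
    Finsupp.degree e = Finsupp.degree (e.erase j) + e j := by
  conv_lhs => rw [← Finsupp.erase_add_single j e]
  rw [Dg_add, Dg_single]

lemma Bpol_homog (e : Fin (N+1) →₀ ℕ) :
    IsHomogD (Finsupp.degree e - 2) (Bpol e : MvPowerSeries (Fin (N+1)) E) := by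
  apply IsHomogD.sum
  intro k hk
  rw [Finset.mem_range] at hk
  have h1 : e (maxv e) ≤ Finsupp.degree e := Finsupp.le_degree _ e
  have h2 : Finsupp.degree e = Finsupp.degree (e.erase (maxv e)) + e (maxv e) :=
    Dg_erase e (maxv e)
  have h4 := ((IsHomogD.monomial (E := E) (e.erase (maxv e)) (1:E)).mul
      ((IsHomogD.X (E := E) (maxv e)).pow (k := e (maxv e) - 2 - k))).mul
      (((tlo_homog (E := E) (maxv e)).neg).pow (k := k))
  rwa [show Finsupp.degree (e.erase (maxv e)) + (e (maxv e) - 2 - k) + k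
      = Finsupp.degree e - 2 from by omega] at h4

lemma Bpol_eq_zero_of_le_one (e : Fin (N+1) →₀ ℕ) (h : e (maxv e) ≤ 1) :
    (Bpol e : MvPowerSeries (Fin (N+1)) E) = 0 := by
  rw [Bpol, show e (maxv e) - 1 = 0 by omega]
  simp

lemma tpol_homog (i : Fin (N+1)) (e : Fin (N+1) →₀ ℕ) :
    IsHomogD (Finsupp.degree e - 1) (tpol i e : MvPowerSeries (Fin (N+1)) E) := by
  rw [tpol]
  split
  · exact IsHomogD.zero _
  · rename_i he
    have ha1 : 1 ≤ e (maxv e) := maxv_pos he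
    have h1 : e (maxv e) ≤ Finsupp.degree e := Finsupp.le_degree _ e
    have h2 : Finsupp.degree e = Finsupp.degree (e.erase (maxv e)) + e (maxv e) :=
      Dg_erase e (maxv e)
    split
    · have h4 := (IsHomogD.monomial (E := E) (e.erase (maxv e)) (1:E)).mul
        (((tlo_homog (E := E) (maxv e)).neg).pow (k := e (maxv e) - 1))
      rwa [show Finsupp.degree (e.erase (maxv e)) + (e (maxv e) - 1)
          = Finsupp.degree e - 1 from by omega] at h4
    · split
      · rcases Nat.lt_or_ge (e (maxv e)) 2 with h | h
        · rw [Bpol_eq_zero_of_le_one e (by omega), mul_zero, neg_zero]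
          exact IsHomogD.zero _
        · have h4 := ((IsHomogD.X (E := E) (maxv e)).mul (Bpol_homog e)).neg
          rwa [show 1 + (Finsupp.degree e - 2) = Finsupp.degree e - 1 from by omega] at h4
      · exact IsHomogD.zero _

lemma erase_lt_maxv {e : Fin (N+1) →₀ ℕ} {k : Fin (N+1)} (hk : (e.erase (maxv e)) k ≠ 0) :
    k < maxv e := by
  rw [Finsupp.erase_apply] at hk
  split at hk
  · exact absurd rfl hk
  · rename_i hne
    have : k ∈ e.support := Finsupp.mem_support_iff.mpr hk
    exact lt_of_le_of_ne (le_maxv this) hne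

lemma tpol_vars (i : Fin (N+1)) (e : Fin (N+1) →₀ ℕ) :
    VarsIn {k : Fin (N+1) | k < i} (tpol i e : MvPowerSeries (Fin (N+1)) E) := by
  rw [tpol]
  split
  · exact VarsIn.zero
  · split
    · rename_i hi
      subst hi
      exact (VarsIn.monomial _ (fun k hk => erase_lt_maxv hk)).mul ((tlo_vars _).neg.pow)
    · split
      · rename_i h1 h2
        have hsub : {k : Fin (N+1) | k < maxv e} ⊆ {k : Fin (N+1) | k < i} :=
          fun k hk => lt_trans hk h2
        refine VarsIn.neg ((VarsIn.X (S := {k : Fin (N+1) | k < i}) h2).mul ?_)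
        apply VarsIn.sum
        intro k _
        exact (((VarsIn.monomial _ (fun k hk => erase_lt_maxv hk)).mono hsub).mul
          ((VarsIn.X (S := {k : Fin (N+1) | k < i}) h2).pow)).mul
          (((tlo_vars _).mono hsub).neg.pow)
      · exact VarsIn.zero

lemma upol_homog (i : Fin (N+1)) (e : Fin (N+1) →₀ ℕ) :
    IsHomogD (Finsupp.degree e - 2) (upol i e : MvPowerSeries (Fin (N+1)) E) := by
  rw [upol]
  split
  · exact IsHomogD.zero _
  · split
    · exact Bpol_homog e
    · exact IsHomogD.zero _

lemma maxv_single (i : Fin (N+1)) : maxv (Finsupp.single i 1) = i := by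
  have h1 : maxv (Finsupp.single i 1) ∈ (Finsupp.single i 1).support :=
    maxv_mem (by simp)
  rw [Finsupp.support_single_ne_zero i one_ne_zero] at h1
  simpa using h1

lemma tlo_zero_var : (tlo N 0 : MvPowerSeries (Fin (N+1)) E) = 0 := by
  rw [tlo]
  convert Finset.sum_empty
  rw [Finset.filter_eq_empty_iff]
  intro i _
  exact (Fin.zero_le i).not_gt

lemma tpol_zero_not_single {e : Fin (N+1) →₀ ℕ} (h : e ≠ Finsupp.single 0 1) :
    (tpol 0 e : MvPowerSeries (Fin (N+1)) E) = 0 := by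
  rw [tpol]
  split
  · rfl
  · rename_i he
    split
    · rename_i h0
      have h1 : 1 ≤ e (0 : Fin (N+1)) := by rw [h0]; exact maxv_pos he
      have hsupp : ∀ k ∈ e.support, k = (0 : Fin (N+1)) := by
        intro k hk
        have := le_maxv hk
        rw [← h0] at this
        exact le_antisymm this (Fin.zero_le k)
      have heq : e = Finsupp.single 0 (e 0) := by
        ext k
        rw [Finsupp.single_apply]
        split
        · rename_i hk; subst hk; rfl
        · rename_i hk
          by_contra hc
          exact hk ((hsupp k (Finsupp.mem_support_iff.mpr hc)).symm)
      have ha2 : 2 ≤ e (0 : Fin (N+1)) := by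
        rcases Nat.lt_or_ge (e (0 : Fin (N+1))) 2 with hlt | hge
        · exact absurd (by rw [heq, show e (0 : Fin (N+1)) = 1 by omega]) h
        · exact hge
      rw [← h0, tlo_zero_var, neg_zero, zero_pow (by omega), mul_zero]
    · split
      · rename_i h2
        exact absurd h2 (Fin.zero_le _).not_gt
      · rfl

lemma tpol_single_self (i : Fin (N+1)) :
    (tpol i (Finsupp.single i 1) : MvPowerSeries (Fin (N+1)) E) = 1 := by
  rw [tpol, if_neg (by simp), if_pos (maxv_single i).symm, maxv_single]
  simp [Finsupp.erase_single, monomial_zero_one]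

end PolProps

section PartIV
variable {E : Type*} [CommRing E] {N : ℕ}

/-- The constant exponent bound. -/
noncomputable def cb (N n : ℕ) : Fin (N+1) →₀ ℕ :=
  Finsupp.equivFunOnFinite.symm (fun _ => n)

noncomputable def Erange (N n : ℕ) : Finset (Fin (N+1) →₀ ℕ) :=
  Finset.Icc 0 (cb N n)

lemma mem_Erange {n : ℕ} {e : Fin (N+1) →₀ ℕ} : e ∈ Erange N n ↔ ∀ i, e i ≤ n := by
  rw [Erange, Finset.mem_Icc]
  constructor
  · intro h i
    exact (Finsupp.le_def.mp h.2) i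
  · intro h
    exact ⟨zero_le, Finsupp.le_def.mpr (fun i => h i)⟩

lemma mem_Erange_of_degree_le {n : ℕ} {e : Fin (N+1) →₀ ℕ} (h : Finsupp.degree e ≤ n) :
    e ∈ Erange N n :=
  mem_Erange.mpr (fun i => le_trans (Finsupp.le_degree i e) h)

lemma degree_le_of_not_mem_Erange {n : ℕ} {e : Fin (N+1) →₀ ℕ} (h : e ∉ Erange N n) :
    n < Finsupp.degree e := by
  by_contra hc
  exact h (mem_Erange_of_degree_le (by omega))

/-- The linear operator determined by a family of homogeneous (co)polynomials. -/
noncomputable def opC (P : (Fin (N+1) →₀ ℕ) → MvPowerSeries (Fin (N+1)) E) (c : ℕ)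
    (w : MvPowerSeries (Fin (N+1)) E) : MvPowerSeries (Fin (N+1)) E :=
  fun d => ∑ e ∈ Erange N (Finsupp.degree d + c),
    coeff (R := E) e w * coeff (R := E) d (P e)

lemma coeff_opC (P : (Fin (N+1) →₀ ℕ) → MvPowerSeries (Fin (N+1)) E) (c : ℕ)
    (w : MvPowerSeries (Fin (N+1)) E) (d : Fin (N+1) →₀ ℕ) :
    coeff (R := E) d (opC P c w) = ∑ e ∈ Erange N (Finsupp.degree d + c),
      coeff (R := E) e w * coeff (R := E) d (P e) := rfl

/-- Hypotheses on the polynomial family: homogeneous of degree `deg e - c` and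
vanishing in low degrees. -/
def PolFam (P : (Fin (N+1) →₀ ℕ) → MvPowerSeries (Fin (N+1)) E) (c : ℕ) : Prop :=
  (∀ e, IsHomogD (Finsupp.degree e - c) (P e)) ∧
  (∀ e, Finsupp.degree e < c → P e = 0)

lemma PolFam.coeff_ne_zero {P : (Fin (N+1) →₀ ℕ) → MvPowerSeries (Fin (N+1)) E} {c : ℕ}
    (hP : PolFam P c) {e d : Fin (N+1) →₀ ℕ} (h : coeff (R := E) d (P e) ≠ 0) :
    Finsupp.degree e = Finsupp.degree d + c := by
  have h1 := hP.1 e d h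
  have h2 : ¬ Finsupp.degree e < c := by
    intro hc
    rw [hP.2 e hc] at h
    simp at h
  omega

lemma coeff_opC_mul {P : (Fin (N+1) →₀ ℕ) → MvPowerSeries (Fin (N+1)) E} {c : ℕ}
    (hP : PolFam P c) (w g : MvPowerSeries (Fin (N+1)) E) (d : Fin (N+1) →₀ ℕ) :
    coeff (R := E) d (opC P c w * g) = ∑ e ∈ Erange N (Finsupp.degree d + c),
      coeff (R := E) e w * coeff (R := E) d (P e * g) := by
  classical
  rw [coeff_mul]
  have step1 : ∀ pq : (Fin (N+1) →₀ ℕ) × (Fin (N+1) →₀ ℕ), pq ∈ Finset.HasAntidiagonal.antidiagonal d →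
      coeff (R := E) pq.1 (opC P c w) * coeff (R := E) pq.2 g =
        ∑ e ∈ Erange N (Finsupp.degree d + c),
          coeff (R := E) e w * (coeff (R := E) pq.1 (P e) * coeff (R := E) pq.2 g) := by
    rintro ⟨p, q⟩ hpq
    rw [Finset.HasAntidiagonal.mem_antidiagonal] at hpq
    have hdeg : Finsupp.degree p + Finsupp.degree q = Finsupp.degree d := by
      rw [← hpq, Dg_add]
    rw [coeff_opC, Finset.sum_mul]
    simp only [mul_assoc]
    apply Finset.sum_subset
    · intro e he
      rw [mem_Erange] at he ⊢
      intro i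
      exact le_trans (he i) (by omega)
    · intro e _ hnot
      have := degree_le_of_not_mem_Erange hnot
      have hPz : coeff (R := E) p (P e) = 0 := by
        by_contra hc
        have := hP.coeff_ne_zero hc
        omega
      rw [hPz, zero_mul, mul_zero]
  rw [Finset.sum_congr rfl step1, Finset.sum_comm]
  refine Finset.sum_congr rfl (fun e _ => ?_)
  rw [← Finset.mul_sum, coeff_mul]

lemma opC_ordGE {P : (Fin (N+1) →₀ ℕ) → MvPowerSeries (Fin (N+1)) E} {c : ℕ}
    (hP : PolFam P c) {m : ℕ} {w : MvPowerSeries (Fin (N+1)) E} (hw : OrdGE m w) :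
    OrdGE (m - c) (opC P c w) := by
  intro d hd
  rw [coeff_opC]
  apply Finset.sum_eq_zero
  intro e _
  by_cases h : coeff (R := E) d (P e) = 0
  · rw [h, mul_zero]
  · rw [hw e (by have := hP.coeff_ne_zero h; omega), zero_mul]

lemma opC_varsIn {P : (Fin (N+1) →₀ ℕ) → MvPowerSeries (Fin (N+1)) E} {c : ℕ}
    {S : Set (Fin (N+1))} (hP : ∀ e, VarsIn S (P e)) (w : MvPowerSeries (Fin (N+1)) E) :
    VarsIn S (opC P c w) := by
  intro d hd
  rw [coeff_opC] at hd
  obtain ⟨e, _, hne⟩ := Finset.exists_ne_zero_of_sum_ne_zero hd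
  have : coeff (R := E) d (P e) ≠ 0 := fun h => hne (by rw [h, mul_zero])
  exact hP e d this

lemma tpol_polfam : PolFam (fun e => (tpol i e : MvPowerSeries (Fin (N+1)) E)) 1 := by
  constructor
  · exact fun e => tpol_homog i e
  · intro e he
    have h0 : e = 0 := by
      rw [← Finsupp.degree_eq_zero_iff]; omega
    subst h0
    show (tpol i 0 : MvPowerSeries (Fin (N+1)) E) = 0
    rw [tpol, if_pos rfl]

lemma upol_low {e : Fin (N+1) →₀ ℕ} (h : Finsupp.degree e ≤ 1) :
    (upol i e : MvPowerSeries (Fin (N+1)) E) = 0 := by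
  rw [upol]
  split
  · rfl
  · split
    · apply Bpol_eq_zero_of_le_one
      exact le_trans (Finsupp.le_degree _ e) h
    · rfl

lemma upol_polfam : PolFam (fun e => (upol i e : MvPowerSeries (Fin (N+1)) E)) 2 := by
  constructor
  · exact fun e => upol_homog i e
  · intro e he
    show (upol i e : MvPowerSeries (Fin (N+1)) E) = 0
    exact upol_low (by omega)
end PartIV

section PartV
variable {E : Type*} [CommRing E] {N : ℕ}

lemma PolFam.mul_homog {P : (Fin (N+1) →₀ ℕ) → MvPowerSeries (Fin (N+1)) E} {c : ℕ}
    (hP : PolFam P c) {g : MvPowerSeries (Fin (N+1)) E} {k : ℕ} (hg : IsHomogD k g)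
    (hk : k ≤ c) : PolFam (fun e => P e * g) (c - k) := by
  constructor
  · intro e
    rcases Nat.lt_or_ge (Finsupp.degree e) c with h | h
    · show IsHomogD _ (P e * g)
      rw [hP.2 e h, zero_mul]
      exact IsHomogD.zero _
    · have := (hP.1 e).mul hg
      rwa [show Finsupp.degree e - c + k = Finsupp.degree e - (c - k) from by omega] at this
  · intro e he
    show P e * g = 0
    rw [hP.2 e (by omega), zero_mul]

lemma decomp_eq (w : MvPowerSeries (Fin (N+1)) E) (hw : OrdGE 1 w) :
    w = ∑ i, opC (fun e => (tpol i e : MvPowerSeries (Fin (N+1)) E)) 1 w * X i +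
        ∑ i, opC (fun e => (upol i e : MvPowerSeries (Fin (N+1)) E)) 2 w * (X i * sig1 N) := by
  classical
  apply MvPowerSeries.ext
  intro d
  rw [map_add, map_sum, map_sum]
  rw [Finset.sum_congr rfl (fun i (_ : i ∈ Finset.univ) => coeff_opC_mul tpol_polfam w (X i) d)]
  rw [Finset.sum_congr rfl
    (fun i (_ : i ∈ Finset.univ) => coeff_opC_mul upol_polfam w (X i * sig1 N) d)]
  -- extend the tpol ranges from Dg d + 1 to Dg d + 2
  have hTfam : ∀ i : Fin (N+1),
      PolFam (fun e => (tpol i e : MvPowerSeries (Fin (N+1)) E) * X i) 0 := by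
    intro i
    have := (tpol_polfam (i := i)).mul_homog (IsHomogD.X (E := E) i) (le_refl 1)
    simpa using this
  have hUfam : ∀ i : Fin (N+1),
      PolFam (fun e => (upol i e : MvPowerSeries (Fin (N+1)) E) * (X i * sig1 N)) 0 := by
    intro i
    have := (upol_polfam (i := i)).mul_homog ((IsHomogD.X (E := E) i).mul sig1_homog)
      (by omega)
    simpa using this
  have ext1 : ∀ i : Fin (N+1),
      ∑ e ∈ Erange N (Finsupp.degree d + 1), coeff (R := E) e w * coeff (R := E) d (tpol i e * X i) =
      ∑ e ∈ Erange N (Finsupp.degree d + 2), coeff (R := E) e w * coeff (R := E) d (tpol i e * X i) := by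
    intro i
    apply Finset.sum_subset
    · intro e he
      rw [mem_Erange] at he ⊢
      exact fun k => le_trans (he k) (by omega)
    · intro e _ hnot
      have hgt := degree_le_of_not_mem_Erange hnot
      have : coeff (R := E) d ((fun e => (tpol i e : MvPowerSeries (Fin (N+1)) E) * X i) e) = 0 := by
        by_contra hc
        have := (hTfam i).coeff_ne_zero hc
        omega
      rw [show coeff (R := E) d (tpol i e * X i) = 0 from this, mul_zero]
  rw [Finset.sum_congr rfl (fun i (_ : i ∈ Finset.univ) => ext1 i)]
  rw [← Finset.sum_add_distrib]
  have merge : ∀ x : Fin (N+1),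
      (∑ e ∈ Erange N (Finsupp.degree d + 2), coeff (R := E) e w * coeff (R := E) d (tpol x e * X x) +
        ∑ e ∈ Erange N (Finsupp.degree d + 2),
          coeff (R := E) e w * coeff (R := E) d (upol x e * (X x * sig1 N)))
      = ∑ e ∈ Erange N (Finsupp.degree d + 2),
          coeff (R := E) e w *
            (coeff (R := E) d (tpol x e * X x) + coeff (R := E) d (upol x e * (X x * sig1 N))) := by
    intro x
    rw [← Finset.sum_add_distrib]
    exact Finset.sum_congr rfl (fun e _ => by ring)
  rw [Finset.sum_congr rfl (fun x (_ : x ∈ Finset.univ) => merge x), Finset.sum_comm]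
  have inner : ∀ e ∈ Erange N (Finsupp.degree d + 2),
      (∑ x : Fin (N+1), coeff (R := E) e w *
          (coeff (R := E) d (tpol x e * X x) + coeff (R := E) d (upol x e * (X x * sig1 N))))
        = coeff (R := E) e w * coeff (R := E) d (monomial (R := E) e 1) := by
    intro e _
    by_cases he : e = 0
    · subst he
      have hw0 : coeff (R := E) (0 : Fin (N+1) →₀ ℕ) w = 0 := hw 0 (by simp)
      simp [hw0]
    · rw [← Finset.mul_sum]
      congr 1
      rw [Finset.sum_add_distrib, ← map_sum, ← map_sum, ← map_add, ← monomial_decomp e he]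
  rw [Finset.sum_congr rfl inner]
  rw [Finset.sum_eq_single_of_mem d (mem_Erange_of_degree_le (by omega))]
  · rw [coeff_monomial_same, mul_one]
  · intro b _ hb
    rw [coeff_monomial_ne (fun h => hb h.symm), mul_zero]

end PartV

section PartVI
variable {E : Type*} [CommRing E] {N : ℕ}

lemma OrdGE.sum {τ : Type*} {m : ℕ} {ι : Type*} {s : Finset ι} {f : ι → MvPowerSeries τ E}
    (hf : ∀ i ∈ s, OrdGE m (f i)) : OrdGE m (∑ i ∈ s, f i) := by
  intro d hd
  rw [map_sum]
  exact Finset.sum_eq_zero (fun i hi => hf i hi d hd)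

lemma OrdGE.X (i : Fin (N+1)) : OrdGE 1 (X i : MvPowerSeries (Fin (N+1)) E) :=
  ordGE_of_constantCoeff_eq_zero (coeff_zero_X i)

lemma eq_single_of_degree_eq_one {d : Fin (N+1) →₀ ℕ} (h : Finsupp.degree d = 1) :
    d = Finsupp.single (maxv d) 1 := by
  have hd0 : d ≠ 0 := by
    intro h0; rw [h0, map_zero] at h; omega
  have h1 := Dg_erase d (maxv d)
  have h2 := maxv_pos hd0
  have h3 : Finsupp.degree (d.erase (maxv d)) = 0 := by omega
  have h4 : d (maxv d) = 1 := by omega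
  rw [Finsupp.degree_eq_zero_iff] at h3
  conv_lhs => rw [← Finsupp.erase_add_single (maxv d) d]
  rw [h3, h4, zero_add]

/-- `ρ_j := σ₁ - X j + s_j`, which has order at least 2. -/
noncomputable def rho (L : MvPowerSeries (Fin 2) E) (N : ℕ) (j : Fin (N+1)) :
    MvPowerSeries (Fin (N+1)) E :=
  sig1 N - X j + sser L N j

lemma sig1_coeff_zero : coeff (R := E) (0 : Fin (N+1) →₀ ℕ) (sig1 N) = 0 := by
  rw [sig1, map_sum]
  exact Finset.sum_eq_zero (fun i _ => coeff_zero_X i)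

lemma sig1_coeff_single (i : Fin (N+1)) :
    coeff (R := E) (Finsupp.single i 1) (sig1 N) = 1 := by
  classical
  rw [sig1, map_sum]
  simp only [coeff_X']
  rw [Finset.sum_ite_eq (Finset.univ : Finset (Fin (N+1))) i (fun _ => (1:E))]
  simp

lemma rho_ordGE {L : MvPowerSeries (Fin 2) E} (hL : IsFormalGroupLaw L) (j : Fin (N+1)) :
    OrdGE 2 (rho L N j) := by
  intro d hd
  rw [rho, map_add, map_sub]
  rcases Nat.lt_or_ge (Finsupp.degree d) 1 with h1 | h1
  · have : d = 0 := by rw [← Finsupp.degree_eq_zero_iff]; omega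
    subst this
    rw [sig1_coeff_zero, coeff_zero_X, sser_coeff_zero hL]
    ring
  · have hdeq : Finsupp.degree d = 1 := by omega
    have := eq_single_of_degree_eq_one hdeq
    rw [this, sig1_coeff_single, coeff_X', sser_coeff_single hL]
    by_cases h : maxv d = j
    · rw [if_pos h, if_pos h]; ring
    · rw [if_neg h, if_neg h]; ring

lemma fglRel_eq {L : MvPowerSeries (Fin 2) E} (j : Fin (N+1)) :
    fglRel L N j = X j * sig1 N - X j * rho L N j := by
  rw [fglRel, rho, sser]
  ring

/-- The successive corrections. -/
noncomputable def hseq (L : MvPowerSeries (Fin 2) E) (N : ℕ) :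
    ℕ → MvPowerSeries (Fin (N+1)) E
  | 0 => fglVarSum L N
  | n+1 => ∑ i, opC (fun e => (upol i e : MvPowerSeries (Fin (N+1)) E)) 2 (hseq L N n) *
      (X i * rho L N i)

lemma hseq_ordGE {L : MvPowerSeries (Fin 2) E} (hL : IsFormalGroupLaw L) :
    ∀ n, OrdGE (n+1) (hseq L N n) := by
  intro n
  induction n with
  | zero => exact ordGE_of_constantCoeff_eq_zero (fglVarSum_coeff_zero hL)
  | succ n ih =>
      show OrdGE (n+2) (∑ i, _)
      apply OrdGE.sum
      intro i _
      have h1 := opC_ordGE (upol_polfam (i := i)) ih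
      have h2 := h1.mul ((OrdGE.X i).mul (rho_ordGE hL i))
      exact h2.mono (by omega)

lemma telescope {L : MvPowerSeries (Fin 2) E} (hL : IsFormalGroupLaw L) :
    ∀ n₀ : ℕ, fglVarSum L N =
      ∑ i, (∑ n ∈ Finset.range n₀,
          opC (fun e => (tpol i e : MvPowerSeries (Fin (N+1)) E)) 1 (hseq L N n)) * X i +
        ∑ i, (∑ n ∈ Finset.range n₀,
          opC (fun e => (upol i e : MvPowerSeries (Fin (N+1)) E)) 2 (hseq L N n)) *
            fglRel L N i +
        hseq L N n₀ := by
  intro n₀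
  induction n₀ with
  | zero => simp [hseq]
  | succ n₀ ih =>
      rw [ih]
      rw [show hseq L N n₀ = _ from decomp_eq (hseq L N n₀) ((hseq_ordGE hL n₀).mono (by omega))]
      have hrel : ∀ i : Fin (N+1),
          opC (fun e => (upol i e : MvPowerSeries (Fin (N+1)) E)) 2 (hseq L N n₀) *
              (X i * sig1 N)
            = opC (fun e => (upol i e : MvPowerSeries (Fin (N+1)) E)) 2 (hseq L N n₀) *
                fglRel L N i +
              opC (fun e => (upol i e : MvPowerSeries (Fin (N+1)) E)) 2 (hseq L N n₀) *
                (X i * rho L N i) := by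
        intro i
        rw [fglRel_eq i]
        ring
      rw [Finset.sum_congr rfl (fun i (_ : i ∈ Finset.univ) => hrel i), Finset.sum_add_distrib]
      have hs : hseq L N (n₀+1) = ∑ i,
          opC (fun e => (upol i e : MvPowerSeries (Fin (N+1)) E)) 2 (hseq L N n₀) *
            (X i * rho L N i) := rfl
      rw [hs]
      simp only [Finset.sum_range_succ, add_mul, Finset.sum_add_distrib]
      abel

end PartVI

section PartVII
variable {E : Type*} [CommRing E] {N : ℕ}

/-- The triangular coefficients. -/
noncomputable def ffin (L : MvPowerSeries (Fin 2) E) (N : ℕ) (i : Fin (N+1)) :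
    MvPowerSeries (Fin (N+1)) E :=
  fun d => ∑ n ∈ Finset.range (Finsupp.degree d + 2),
    coeff (R := E) d (opC (fun e => (tpol i e : MvPowerSeries (Fin (N+1)) E)) 1 (hseq L N n))

/-- The ideal cofactors. -/
noncomputable def qfin (L : MvPowerSeries (Fin 2) E) (N : ℕ) (i : Fin (N+1)) :
    MvPowerSeries (Fin (N+1)) E :=
  fun d => ∑ n ∈ Finset.range (Finsupp.degree d + 2),
    coeff (R := E) d (opC (fun e => (upol i e : MvPowerSeries (Fin (N+1)) E)) 2 (hseq L N n))

lemma ffin_part {L : MvPowerSeries (Fin 2) E} (hL : IsFormalGroupLaw L) (i : Fin (N+1))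
    {d : Fin (N+1) →₀ ℕ} {n₀ : ℕ} (h : Finsupp.degree d + 2 ≤ n₀) :
    coeff (R := E) d (ffin L N i) = coeff (R := E) d (∑ n ∈ Finset.range n₀,
      opC (fun e => (tpol i e : MvPowerSeries (Fin (N+1)) E)) 1 (hseq L N n)) := by
  rw [map_sum]
  rw [show coeff (R := E) d (ffin L N i) = ∑ n ∈ Finset.range (Finsupp.degree d + 2),
    coeff (R := E) d (opC (fun e => (tpol i e : MvPowerSeries (Fin (N+1)) E)) 1 (hseq L N n)) from rfl]
  apply Finset.sum_subset (Finset.range_subset_range.mpr h)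
  intro n _ hn
  rw [Finset.mem_range, not_lt] at hn
  have h1 := opC_ordGE (tpol_polfam (i := i)) (hseq_ordGE hL n)
  exact h1 d (by omega)

lemma qfin_part {L : MvPowerSeries (Fin 2) E} (hL : IsFormalGroupLaw L) (i : Fin (N+1))
    {d : Fin (N+1) →₀ ℕ} {n₀ : ℕ} (h : Finsupp.degree d + 2 ≤ n₀) :
    coeff (R := E) d (qfin L N i) = coeff (R := E) d (∑ n ∈ Finset.range n₀,
      opC (fun e => (upol i e : MvPowerSeries (Fin (N+1)) E)) 2 (hseq L N n)) := by
  rw [map_sum]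
  rw [show coeff (R := E) d (qfin L N i) = ∑ n ∈ Finset.range (Finsupp.degree d + 2),
    coeff (R := E) d (opC (fun e => (upol i e : MvPowerSeries (Fin (N+1)) E)) 2 (hseq L N n)) from rfl]
  apply Finset.sum_subset (Finset.range_subset_range.mpr h)
  intro n _ hn
  rw [Finset.mem_range, not_lt] at hn
  have h1 := opC_ordGE (upol_polfam (i := i)) (hseq_ordGE hL n)
  exact h1 d (by omega)

lemma coeff_mul_congr {τ : Type*} {u v g : MvPowerSeries τ E} {d : τ →₀ ℕ}
    (h : ∀ p q : τ →₀ ℕ, p + q = d → coeff (R := E) p u = coeff (R := E) p v) :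
    coeff (R := E) d (u * g) = coeff (R := E) d (v * g) := by
  classical
  rw [coeff_mul, coeff_mul]
  refine Finset.sum_congr rfl ?_
  rintro ⟨p, q⟩ hpq
  rw [Finset.HasAntidiagonal.mem_antidiagonal] at hpq
  rw [h p q hpq]

lemma master {L : MvPowerSeries (Fin 2) E} (hL : IsFormalGroupLaw L) :
    fglVarSum L N = ∑ i, ffin L N i * X i + ∑ i, qfin L N i * fglRel L N i := by
  apply MvPowerSeries.ext
  intro d
  rw [telescope hL (Finsupp.degree d + 2)]
  rw [map_add, map_add, map_add, map_sum, map_sum, map_sum, map_sum]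
  rw [hseq_ordGE hL (Finsupp.degree d + 2) d (by omega), add_zero]
  congr 1
  · refine Finset.sum_congr rfl (fun i _ => ?_)
    symm
    apply coeff_mul_congr
    intro p q hpq
    have hdp : Finsupp.degree p ≤ Finsupp.degree d := by
      rw [← hpq, Dg_add]; omega
    exact ffin_part hL i (by omega)
  · refine Finset.sum_congr rfl (fun i _ => ?_)
    symm
    apply coeff_mul_congr
    intro p q hpq
    have hdp : Finsupp.degree p ≤ Finsupp.degree d := by
      rw [← hpq, Dg_add]; omega
    exact qfin_part hL i (by omega)

lemma ffin_zero_eq_one {L : MvPowerSeries (Fin 2) E} (hL : IsFormalGroupLaw L) :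
    ffin L N 0 = 1 := by
  classical
  apply MvPowerSeries.ext
  intro d
  rw [show coeff (R := E) d (ffin L N 0) = ∑ n ∈ Finset.range (Finsupp.degree d + 2),
    coeff (R := E) d (opC (fun e => (tpol 0 e : MvPowerSeries (Fin (N+1)) E)) 1 (hseq L N n))
    from rfl]
  have hn : ∀ n, 1 ≤ n →
      coeff (R := E) d (opC (fun e => (tpol 0 e : MvPowerSeries (Fin (N+1)) E)) 1 (hseq L N n))
        = 0 := by
    intro n hn1
    rw [coeff_opC]
    apply Finset.sum_eq_zero
    intro e _
    by_cases he : e = Finsupp.single 0 1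
    · subst he
      rw [hseq_ordGE hL n _ (by rw [Dg_single]; omega), zero_mul]
    · rw [tpol_zero_not_single he, map_zero, mul_zero]
  have h0 : coeff (R := E) d (opC (fun e => (tpol 0 e : MvPowerSeries (Fin (N+1)) E)) 1
      (hseq L N 0)) = coeff (R := E) d 1 := by
    rw [coeff_opC]
    rw [Finset.sum_eq_single_of_mem (Finsupp.single 0 1)
      (mem_Erange_of_degree_le (by rw [Dg_single]; omega))]
    · rw [show hseq L N 0 = fglVarSum L N from rfl, fglVarSum_coeff_single_zero hL,
        tpol_single_self, one_mul]
    · intro b _ hb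
      rw [tpol_zero_not_single hb, map_zero, mul_zero]
  rw [Finset.sum_eq_single_of_mem 0 (Finset.mem_range.mpr (by omega))]
  · exact h0
  · intro n _ hn0
    exact hn n (by omega)

lemma ffin_triangular {L : MvPowerSeries (Fin 2) E} (j : Fin (N+1)) (d : Fin (N+1) →₀ ℕ)
    (h : coeff (R := E) d (ffin L N j) ≠ 0) : ∀ i : Fin (N+1), d i ≠ 0 → i < j := by
  rw [show coeff (R := E) d (ffin L N j) = ∑ n ∈ Finset.range (Finsupp.degree d + 2),
    coeff (R := E) d (opC (fun e => (tpol j e : MvPowerSeries (Fin (N+1)) E)) 1 (hseq L N n))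
    from rfl] at h
  obtain ⟨n, _, hne⟩ := Finset.exists_ne_zero_of_sum_ne_zero h
  have := opC_varsIn (S := {k : Fin (N+1) | k < j}) (fun e => tpol_vars j e) (hseq L N n)
    (c := 1) d hne
  exact this

end PartVII


/-- In the quotient `R` of `E⟦D₀,…,D_N⟧` by the ideal generated by the
relations `r_j`, the iterated formal sum `L(D₀,…,D_N)` can be written as
`f₀·D₀ + f₁(D₀)·D₁ + ⋯ + f_N(D₀,…,D_{N−1})·D_N` with `f₀ = 1` and `f_j` involving only
the variables `D₀,…,D_{j−1}`. -/
theorem exists_triangular_decomposition_of_fglVarSum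
    {E : Type*} [CommRing E] (L : MvPowerSeries (Fin 2) E) (hL : IsFormalGroupLaw L) (N : ℕ) :
    ∃ f : Fin (N + 1) → MvPowerSeries (Fin (N + 1)) E,
      f 0 = 1 ∧
      (∀ j : Fin (N + 1), ∀ d : Fin (N + 1) →₀ ℕ,
          MvPowerSeries.coeff d (f j) ≠ 0 → ∀ i : Fin (N + 1), d i ≠ 0 → i < j) ∧
      Ideal.Quotient.mk (Ideal.span (Set.range (fglRel L N))) (fglVarSum L N) =
        Ideal.Quotient.mk (Ideal.span (Set.range (fglRel L N)))
          (∑ j : Fin (N + 1), f j * X j) := by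
  refine ⟨ffin L N, ffin_zero_eq_one hL, fun j d h => ffin_triangular j d h, ?_⟩
  rw [Ideal.Quotient.eq, master hL]
  rw [show (∑ i, ffin L N i * X i + ∑ i, qfin L N i * fglRel L N i)
      - ∑ j, ffin L N j * X j = ∑ i, qfin L N i * fglRel L N i from by ring]
  apply Ideal.sum_mem
  intro i _
  exact Ideal.mul_mem_left _ _ (Ideal.subset_span ⟨i, rfl⟩)
end

section
/- Let E be an integral domain and N ≥ 1. Suppose h ∈ E⟦D₀,…,D_N⟧ involves only the variables D₀,…,D_{N−1} (that is, h lies in the image of the canonical inclusion E⟦D₀,…,D_{N−1}⟧ → E⟦D₀,…,D_N⟧), and suppose that h·D_N belongs to the principal ideal of E⟦D₀,…,D_N⟧ generated by D₀ + D₁ + ⋯ + D_N. Then h = 0. -/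
open MvPowerSeries

private lemma coeff_mul_X' {E : Type*} [CommRing E] {σ : Type*} [DecidableEq σ]
    (φ : MvPowerSeries σ E) (s : σ) (m : σ →₀ ℕ) :
    MvPowerSeries.coeff m (φ * X s) =
      if Finsupp.single s 1 ≤ m then MvPowerSeries.coeff (m - Finsupp.single s 1) φ else 0 := by
  rw [X, coeff_mul_monomial]
  simp

/-- Over an integral domain `E`, if `h ∈ E⟦D₀,…,D_N⟧` (with `N ≥ 1`)
involves only the variables `D₀,…,D_{N−1}` and `h·D_N` lies in the principal ideal
generated by `D₀ + D₁ + ⋯ + D_N`, then `h = 0`. -/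
theorem eq_zero_of_mul_lastVar_mem_span_sum
    {E : Type*} [CommRing E] [IsDomain E] (N : ℕ) (hN : 1 ≤ N)
    (h : MvPowerSeries (Fin (N + 1)) E)
    (hvars : ∀ d : Fin (N + 1) →₀ ℕ,
      MvPowerSeries.coeff d h ≠ 0 → ∀ i : Fin (N + 1), d i ≠ 0 → (i : ℕ) < N)
    (hmem : h * X (Fin.last N) ∈
      Ideal.span {(∑ i : Fin (N + 1), X i : MvPowerSeries (Fin (N + 1)) E)}) :
    h = 0 := by
  classical
  rw [Ideal.mem_span_singleton'] at hmem
  obtain ⟨g, hg⟩ := hmem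
  set e : Fin (N + 1) → (Fin (N + 1) →₀ ℕ) := fun i => Finsupp.single i 1 with he
  -- h has no coefficients involving the last variable
  have hlast : ∀ d : Fin (N + 1) →₀ ℕ, d (Fin.last N) ≠ 0 → MvPowerSeries.coeff d h = 0 := by
    intro d hd
    by_contra hc
    have := hvars d hc (Fin.last N) hd
    simp at this
  -- main coefficient equation
  have key : ∀ d : Fin (N + 1) →₀ ℕ,
      (∑ i : Fin (N + 1), if e i ≤ d then MvPowerSeries.coeff (d - e i) g else 0)
        = (if e (Fin.last N) ≤ d then MvPowerSeries.coeff (d - e (Fin.last N)) h else 0) := by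
    intro d
    have h1 := congrArg (MvPowerSeries.coeff d) hg
    rw [Finset.mul_sum, map_sum] at h1
    rw [coeff_mul_X'] at h1
    rw [← h1]
    refine Finset.sum_congr rfl fun i _ => ?_
    rw [coeff_mul_X']
  -- step 1: coefficients of g at indices involving the last variable vanish
  have step1 : ∀ k : ℕ, ∀ d : Fin (N + 1) →₀ ℕ,
      (∑ j : Fin N, d (Fin.castSucc j)) = k → d (Fin.last N) ≠ 0 →
      MvPowerSeries.coeff d g = 0 := by
    intro k
    induction k using Nat.strong_induction_on with
    | _ k IH =>
      intro d hdk hd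
      have hk := key (d + e (Fin.last N))
      rw [Fin.sum_univ_castSucc] at hk
      -- last term on the left is coeff d g
      have hle : e (Fin.last N) ≤ d + e (Fin.last N) := le_add_self
      simp only [if_pos hle, add_tsub_cancel_right] at hk
      -- right hand side is coeff d h, zero since d last ≠ 0
      have hrhs : MvPowerSeries.coeff d h = 0 := hlast d hd
      rw [hrhs] at hk
      -- the other terms vanish by the IH
      have hterms : ∀ j : Fin N,
          (if e (Fin.castSucc j) ≤ d + e (Fin.last N) then
            MvPowerSeries.coeff (d + e (Fin.last N) - e (Fin.castSucc j)) g else 0) = 0 := by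
        intro j
        split_ifs with hj
        · set d' := d + e (Fin.last N) - e (Fin.castSucc j) with hd'
          have hne : Fin.castSucc j ≠ Fin.last N := (Fin.castSucc_lt_last j).ne
          have hdj : 1 ≤ d (Fin.castSucc j) := by
            have := hj (Fin.castSucc j)
            simpa [he, Finsupp.single_apply, Ne.symm hne] using this
          have happ : ∀ i : Fin (N + 1), d' i =
              d i + (if Fin.last N = i then 1 else 0) - (if Fin.castSucc j = i then 1 else 0) := by
            intro i
            simp [hd', he, Finsupp.tsub_apply, Finsupp.add_apply, Finsupp.single_apply]
          have hd'last : d' (Fin.last N) ≠ 0 := by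
            rw [happ]
            simp [hne]
          have hsum : (∑ i : Fin N, d' (Fin.castSucc i)) < k := by
            rw [← hdk]
            apply Finset.sum_lt_sum
            · intro i _
              rw [happ]
              have hni : ¬ Fin.last N = Fin.castSucc i :=
                fun hh => (Fin.castSucc_lt_last i).ne hh.symm
              rw [if_neg hni, add_zero]
              exact Nat.sub_le _ _
            · refine ⟨j, Finset.mem_univ j, ?_⟩
              rw [happ]
              have hnj : ¬ Fin.last N = Fin.castSucc j := fun hh => hne hh.symm
              rw [if_neg hnj, add_zero, if_pos rfl]
              omega
          exact IH _ hsum d' rfl hd'last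
        · rfl
      rw [Finset.sum_eq_zero (fun j _ => hterms j), zero_add] at hk
      exact hk
  -- step 2: g = h
  have hgh : g = h := by
    ext d
    by_cases hd : d (Fin.last N) = 0
    · have hk := key (d + e (Fin.last N))
      rw [Fin.sum_univ_castSucc] at hk
      have hle : e (Fin.last N) ≤ d + e (Fin.last N) := le_add_self
      simp only [if_pos hle, add_tsub_cancel_right] at hk
      have hterms : ∀ j : Fin N,
          (if e (Fin.castSucc j) ≤ d + e (Fin.last N) then
            MvPowerSeries.coeff (d + e (Fin.last N) - e (Fin.castSucc j)) g else 0) = 0 := by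
        intro j
        split_ifs with hj
        · set d' := d + e (Fin.last N) - e (Fin.castSucc j) with hd'
          have hne : Fin.castSucc j ≠ Fin.last N := (Fin.castSucc_lt_last j).ne
          have hd'last : d' (Fin.last N) ≠ 0 := by
            simp [hd', he, Finsupp.tsub_apply, Finsupp.add_apply, Finsupp.single_apply, hne]
          exact step1 _ d' rfl hd'last
        · rfl
      rw [Finset.sum_eq_zero (fun j _ => hterms j), zero_add] at hk
      exact hk
    · rw [step1 _ d rfl hd, hlast d hd]
  subst hgh
  -- now h * (∑_{i<N} X i) = 0
  have hsplit : (∑ i : Fin (N + 1), X i : MvPowerSeries (Fin (N + 1)) E)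
      = (∑ i : Fin N, X (Fin.castSucc i)) + X (Fin.last N) := by
    rw [Fin.sum_univ_castSucc]
  rw [hsplit, mul_add, add_eq_right] at hg
  -- the truncated sum is nonzero
  have i0 : Fin N := ⟨0, hN⟩
  have hT : (∑ i : Fin N, X (Fin.castSucc i) : MvPowerSeries (Fin (N + 1)) E) ≠ 0 := by
    intro hT0
    have := congrArg (MvPowerSeries.coeff (Finsupp.single (Fin.castSucc i0) 1)) hT0
    rw [map_sum] at this
    rw [Finset.sum_eq_single i0] at this
    · rw [coeff_X, if_pos rfl] at this
      simp at this
    · intro j _ hj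
      rw [coeff_X, if_neg]
      intro hc
      exact hj (Fin.castSucc_inj.mp ((Finsupp.single_left_inj one_ne_zero).mp hc)).symm
    · intro hc
      exact absurd (Finset.mem_univ i0) hc
  exact (mul_eq_zero.mp hg).resolve_right hT
end

section
/- Let H be a Lie group (a smooth finite-dimensional manifold with smooth group operations) acting continuously on a topological space Y, and suppose Y is metrizable, separable, and a Palais proper H-space. Let (U_i)_{i ∈ I} be an open cover of Y such that each U_i is H-invariant. Then there exists an H-equivariant partition of unity subordinate to this cover: a family of continuous functions ρ_i : Y → [0,1] such that ρ_i(h·y) = ρ_i(y) for all h ∈ H and y ∈ Y, the closed support of each ρ_i is contained in U_i, the family of supports is locally finite, and Σ_{i ∈ I} ρ_i(y) = 1 for every y ∈ Y. -/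
open scoped Manifold Pointwise

/-- `((U,V)) = {h ∈ H : hU ∩ V ≠ ∅}`. -/
def transporter (H : Type*) {Y : Type*} [SMul H Y] (U V : Set Y) : Set H :=
  {h : H | ∃ u ∈ U, h • u ∈ V}

/-- `U` is thin relative to `V` if `((U,V))` has compact closure in `H`. -/
def IsThinRel (H : Type*) {Y : Type*} [TopologicalSpace H] [SMul H Y] (U V : Set Y) : Prop :=
  IsCompact (closure (transporter H U V))

/-- `S` is a small subset if every point of `Y` admits a neighbourhood which is thin
relative to `S`. -/
def IsSmall (H : Type*) {Y : Type*} [TopologicalSpace H] [TopologicalSpace Y] [SMul H Y]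
    (S : Set Y) : Prop :=
  ∀ y : Y, ∃ U ∈ nhds y, IsThinRel H U S

/-- The action of `H` on `Y` is Palais proper if every point of `Y` admits a neighbourhood
which is a small subset. -/
def PalaisProper (H Y : Type*) [TopologicalSpace H] [TopologicalSpace Y] [SMul H Y] : Prop :=
  ∀ y : Y, ∃ U ∈ nhds y, IsSmall H U

section Aux

open Set

variable {H : Type*} {Y : Type*} [TopologicalSpace H] [Group H] [IsTopologicalGroup H]
  [TopologicalSpace Y] [MulAction H Y] [ContinuousSMul H Y]

/-- Key lemma: if `K` is a closed subset of a small set `S`, then the saturation `H • K`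
is closed. -/
lemma isClosed_univ_smul_of_small {S K : Set Y} (hS : IsSmall H S) (hKS : K ⊆ S)
    (hK : IsClosed K) : IsClosed ((Set.univ : Set H) • K) := by
  refine isClosed_of_closure_subset fun z hz => ?_
  obtain ⟨U, hU, hthin⟩ := hS z
  set L : Set H := closure ((transporter H U S)⁻¹) with hL
  have hLcomp : IsCompact L := by
    rw [hL, ← inv_closure]
    exact hthin.inv
  have hzL : z ∈ closure (L • K) := by
    rw [mem_closure_iff_nhds] at hz ⊢
    intro N hN
    obtain ⟨x, hxNU, hxK⟩ := hz (N ∩ U) (Filter.inter_mem hN hU)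
    obtain ⟨h, -, k, hk, rfl⟩ := hxK
    have hhL : h ∈ L := by
      refine subset_closure ?_
      rw [Set.mem_inv]
      exact ⟨h • k, hxNU.2, by rw [inv_smul_smul]; exact hKS hk⟩
    exact ⟨h • k, hxNU.1, Set.smul_mem_smul hhL hk⟩
  have hclosed : IsClosed (L • K) := hK.smul_left_of_isCompact hLcomp
  have : z ∈ L • K := hclosed.closure_eq ▸ hzL
  exact Set.smul_subset_smul_right (Set.subset_univ L) this

omit [TopologicalSpace H] [IsTopologicalGroup H] [TopologicalSpace Y] [ContinuousSMul H Y] in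
lemma univ_smul_eq_preimage_image (K : Set Y) :
    (Quotient.mk (MulAction.orbitRel H Y)) ⁻¹'
      ((Quotient.mk (MulAction.orbitRel H Y)) '' K) = (Set.univ : Set H) • K := by
  ext x
  constructor
  · rintro ⟨k, hk, hqk⟩
    obtain ⟨h, rfl⟩ : x ∈ MulAction.orbit H k := Quotient.exact hqk.symm
    exact ⟨h, Set.mem_univ h, k, hk, rfl⟩
  · rintro ⟨h, -, k, hk, rfl⟩
    exact ⟨k, hk, Quotient.sound ⟨h⁻¹, inv_smul_smul h k⟩⟩

end Aux

/-- If a Lie group `H` acts continuously on a metrizable, separable,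
Palais proper `H`-space `Y`, then every open cover of `Y` by `H`-invariant sets admits an
`H`-equivariant (continuous, locally finite) partition of unity subordinate to it. -/
theorem exists_equivariant_partition_of_unity
    {n : ℕ} {H : Type*} [TopologicalSpace H]
    [ChartedSpace (EuclideanSpace ℝ (Fin n)) H] [Group H] [LieGroup (𝓡 n) (⊤ : ℕ∞) H]
    {Y : Type*} [TopologicalSpace Y] [TopologicalSpace.MetrizableSpace Y]
    [TopologicalSpace.SeparableSpace Y] [MulAction H Y] [ContinuousSMul H Y]
    (hY : PalaisProper H Y)
    {ι : Type*} (U : ι → Set Y) (hopen : ∀ i, IsOpen (U i))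
    (hcover : ⋃ i, U i = Set.univ)
    (hinv : ∀ i, ∀ h : H, h • U i = U i) :
    ∃ ρ : ι → Y → ℝ,
      (∀ i, Continuous (ρ i)) ∧
      (∀ i y, ρ i y ∈ Set.Icc (0 : ℝ) 1) ∧
      (∀ i, ∀ h : H, ∀ y : Y, ρ i (h • y) = ρ i y) ∧
      (∀ i, tsupport (ρ i) ⊆ U i) ∧
      (LocallyFinite fun i => Function.support (ρ i)) ∧
      ∀ y, ∑ᶠ i, ρ i y = 1 := by
  classical
  haveI : IsTopologicalGroup H := topologicalGroup_of_lieGroup (I := 𝓡 n) (n := (⊤ : ℕ∞))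
  -- second countability of `Y`
  letI : MetricSpace Y := TopologicalSpace.metrizableSpaceMetric Y
  haveI : SecondCountableTopology Y :=
    UniformSpace.secondCountable_of_separable Y
  -- the orbit space
  set Q := Quotient (MulAction.orbitRel H Y) with hQ
  set q : Y → Q := Quotient.mk (MulAction.orbitRel H Y) with hq
  have hqcont : Continuous q := continuous_quotient_mk'
  have hqsurj : Function.Surjective q := Quotient.mk''_surjective
  have hqm : Topology.IsQuotientMap q := isQuotientMap_quot_mk
  have hsat : ∀ A : Set Y, q ⁻¹' (q '' A) = (Set.univ : Set H) • A :=
    univ_smul_eq_preimage_image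
  have hsmul_open : ∀ {A : Set Y}, IsOpen A → IsOpen ((Set.univ : Set H) • A) := by
    intro A hA
    have : (Set.univ : Set H) • A = ⋃ h : H, h • A := by
      ext x
      constructor
      · rintro ⟨h, -, a, ha, rfl⟩
        exact Set.mem_iUnion.2 ⟨h, a, ha, rfl⟩
      · intro hx
        obtain ⟨h, a, ha, rfl⟩ := Set.mem_iUnion.1 hx
        exact ⟨h, Set.mem_univ h, a, ha, rfl⟩
    rw [this]
    exact isOpen_iUnion fun h => hA.smul h
  have hopenmap : IsOpenMap q := by
    intro O hO
    rw [← hqm.isOpen_preimage, hsat]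
    exact hsmul_open hO
  -- `Q` is second countable
  haveI : SecondCountableTopology Q := hqm.secondCountableTopology hopenmap
  -- closed saturations
  have hsatclosed : ∀ {S K : Set Y}, IsSmall H S → K ⊆ S → IsClosed K →
      IsClosed (q '' K) := by
    intro S K hS hKS hK
    rw [← hqm.isClosed_preimage, hsat]
    exact isClosed_univ_smul_of_small hS hKS hK
  -- `Q` is T1
  haveI : T1Space Q := by
    refine ⟨fun x => ?_⟩
    obtain ⟨y, rfl⟩ := hqsurj x
    obtain ⟨S, hSn, hSs⟩ := hY y
    have : ({q y} : Set Q) = q '' {y} := by simp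
    rw [this]
    exact hsatclosed hSs (Set.singleton_subset_iff.2 (mem_of_mem_nhds hSn))
      isClosed_singleton
  -- `Q` is regular
  haveI : RegularSpace Q := by
    refine RegularSpace.of_exists_mem_nhds_isClosed_subset fun x s hs => ?_
    obtain ⟨y, rfl⟩ := hqsurj x
    obtain ⟨S, hSn, hSs⟩ := hY y
    have hWn : q ⁻¹' interior s ∈ nhds y := by
      refine hqcont.continuousAt.preimage_mem_nhds ?_
      exact interior_mem_nhds.2 hs
    obtain ⟨C, ⟨hCn, hCcl⟩, hCsub⟩ :=
      ((closed_nhds_basis y).mem_iff).1 (Filter.inter_mem hWn hSn)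
    refine ⟨q '' C, ?_, hsatclosed hSs (fun x hx => (hCsub hx).2) hCcl, ?_⟩
    · have hVn : q '' interior C ∈ nhds (q y) := by
        refine mem_nhds_iff.2 ⟨q '' interior C, le_refl _, hopenmap _ isOpen_interior, ?_⟩
        exact ⟨y, mem_interior_iff_mem_nhds.2 hCn, rfl⟩
      exact Filter.mem_of_superset hVn (Set.image_mono (f := q) interior_subset)
    · refine Set.Subset.trans (Set.image_mono (f := q) fun x hx => (hCsub hx).1) ?_
      exact (Set.image_preimage_subset q (interior s)).trans interior_subset
  haveI : T3Space Q := ⟨⟩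
  haveI : TopologicalSpace.MetrizableSpace Q :=
    TopologicalSpace.metrizableSpace_of_t3_secondCountable Q
  letI : MetricSpace Q := TopologicalSpace.metrizableSpaceMetric Q
  -- the pushed-forward cover
  set V : ι → Set Q := fun i => q '' U i with hV
  have hVopen : ∀ i, IsOpen (V i) := fun i => hopenmap _ (hopen i)
  have hVpre : ∀ i, q ⁻¹' V i = U i := by
    intro i
    rw [hV]
    simp only
    rw [hsat]
    ext x
    constructor
    · rintro ⟨h, -, u, hu, rfl⟩
      rw [← hinv i h]
      exact Set.smul_mem_smul_set hu
    · intro hx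
      exact ⟨1, Set.mem_univ 1, x, hx, one_smul H x⟩
  have hVcover : Set.univ ⊆ ⋃ i, V i := by
    rintro x -
    obtain ⟨y, rfl⟩ := hqsurj x
    have : y ∈ ⋃ i, U i := hcover ▸ Set.mem_univ y
    obtain ⟨i, hi⟩ := Set.mem_iUnion.1 this
    exact Set.mem_iUnion.2 ⟨i, y, hi, rfl⟩
  obtain ⟨f, hf⟩ := PartitionOfUnity.exists_isSubordinate isClosed_univ V hVopen hVcover
  refine ⟨fun i y => f i (q y), fun i => (f i).continuous.comp hqcont, ?_, ?_, ?_, ?_, ?_⟩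
  · exact fun i y => ⟨f.nonneg i (q y), f.le_one i (q y)⟩
  · intro i h y
    have hqe : q (h • y) = q y := Quotient.sound ⟨h, rfl⟩
    show f i (q (h • y)) = f i (q y)
    rw [hqe]
  · intro i
    have h1 : Function.support (fun y => f i (q y)) ⊆ q ⁻¹' tsupport (f i) := by
      intro y hy
      exact subset_closure hy
    have h2 : tsupport (fun y => f i (q y)) ⊆ q ⁻¹' tsupport (f i) :=
      closure_minimal h1 (isClosed_closure.preimage hqcont)
    refine h2.trans ?_
    rw [← hVpre i]
    exact Set.preimage_mono (hf i)
  · have := f.locallyFinite.preimage_continuous hqcont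
    refine this.subset fun i => ?_
    intro y hy
    exact hy
  · intro y
    exact f.sum_eq_one (Set.mem_univ (q y))
end
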